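/- Let d ∈ ℕ, C ≥ 1, and let P be a polynomial of degree d with integer coefficients. Let N ≥ 1, and let f₀, f₁ : ℤ → ℂ be functions supported on [−C N^d, C N^d] with |f₀|, |f₁| ≤ 1, and let θ : {1,...,⌊N⌋} → ℂ. Then |(1/N^{d+1}) ∑_{m∈ℤ} ∑_{n=1}^{⌊N⌋} θ(n) f₀(m) f₁(m + P(n))| ≪_{C,P} ‖θ‖_{u^{d+1}[N]}, where ‖θ‖_{u^{d+1}[N]} = sup_{Q ∈ ℝ[y], deg Q ≤ d} |(1/⌊N⌋) ∑_{n=1}^{⌊N⌋} θ(n) e(−Q(n))|. -/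

import Mathlib

noncomputable section

/-- `e(x) = e^{2πix}`. -/
def e (x : ℝ) : ℂ := Complex.exp (2 * Real.pi * Complex.I * x)

/-- The `u^{s}[N]` norm: the maximal correlation of `θ` with polynomial phases of
degree at most `s - 1`; here with `s = d + 1` we take degree at most `d`. -/
def usNorm (d : ℕ) (θ : ℤ → ℂ) (N : ℝ) : ℝ :=
  ⨆ Q : {Q : Polynomial ℝ // Q.natDegree ≤ d},
    ‖(⌊N⌋ : ℂ)⁻¹ * ∑ n ∈ Finset.Icc (1:ℤ) ⌊N⌋, θ n * e (-(Q.1.eval (n : ℝ)))‖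



lemma e_add (x y : ℝ) : e (x + y) = e x * e y := by
  unfold e; rw [← Complex.exp_add]; congr 1; push_cast; ring

lemma e_zero : e 0 = 1 := by simp [e]

lemma e_int (t : ℤ) : e t = 1 := by
  unfold e
  rw [show 2 * (Real.pi:ℂ) * Complex.I * ((t:ℝ):ℂ) = (t:ℤ) * (2 * Real.pi * Complex.I) by
    push_cast; ring]
  exact Complex.exp_int_mul_two_pi_mul_I t

lemma e_conj (x : ℝ) : (starRingEnd ℂ) (e x) = e (-x) := by
  unfold e
  rw [← Complex.exp_conj]; congr 1
  simp only [map_mul, Complex.conj_I, Complex.conj_ofReal, map_ofNat, Complex.ofReal_neg]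
  ring

lemma e_pow (x : ℝ) (k : ℕ) : e x ^ k = e (k * x) := by
  unfold e; rw [← Complex.exp_nat_mul]; congr 1; push_cast; ring

lemma abs_e (x : ℝ) : ‖e x‖ = 1 := by
  unfold e
  rw [Complex.norm_exp]
  norm_num [Complex.mul_re, Complex.I_re, Complex.I_im, Complex.ofReal_re, Complex.ofReal_im]

lemma e_ne_one {x : ℝ} (h : ∀ n : ℤ, x ≠ n) : e x ≠ 1 := by
  unfold e
  rw [ne_eq, Complex.exp_eq_one_iff]
  rintro ⟨n, hn⟩
  apply h n
  have h2 : (2 * (Real.pi:ℂ) * Complex.I) ≠ 0 := by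
    simp [Real.pi_ne_zero, Complex.I_ne_zero]
  have : (2 * (Real.pi:ℂ) * Complex.I) * x = (2 * (Real.pi:ℂ) * Complex.I) * n := by
    linear_combination hn
  have := mul_left_cancel₀ h2 this
  exact_mod_cast this

lemma sum_e_delta (Mn : ℕ) (hMn : 0 < Mn) (a : ℤ) (ha : |a| < (Mn:ℤ)) :
    ∑ k ∈ Finset.range Mn, e ((k:ℝ) * (a:ℝ) / (Mn:ℝ)) = if a = 0 then (Mn:ℂ) else 0 := by
  rcases eq_or_ne a 0 with rfl | h
  · simp [e_zero]
  · rw [if_neg h]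
    have hM0 : (Mn:ℝ) ≠ 0 := Nat.cast_ne_zero.mpr hMn.ne'
    have hz : e ((a:ℝ) / Mn) ≠ 1 := by
      apply e_ne_one
      intro n hn
      have : (a:ℝ) = n * Mn := by field_simp at hn; linarith [hn]
      have ha' : a = n * Mn := by exact_mod_cast this
      rcases eq_or_ne n 0 with rfl | hn0
      · simp at ha'; exact h ha'
      · have : (Mn:ℤ) ≤ |a| := by
          rw [ha', abs_mul]
          calc (Mn:ℤ) = 1 * |(Mn:ℤ)| := by
                rw [one_mul, abs_of_nonneg (by positivity)]
            _ ≤ |n| * |(Mn:ℤ)| := by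
                apply mul_le_mul_of_nonneg_right _ (abs_nonneg _)
                exact Int.one_le_abs hn0
        omega
    have : ∑ k ∈ Finset.range Mn, e ((k:ℝ) * (a:ℝ) / (Mn:ℝ))
        = ∑ k ∈ Finset.range Mn, (e ((a:ℝ)/Mn)) ^ k := by
      refine Finset.sum_congr rfl fun k _ => ?_
      rw [e_pow]; congr 1; ring
    rw [this, geom_sum_eq hz, e_pow]
    rw [show (Mn:ℝ) * ((a:ℝ)/Mn) = ((a:ℤ):ℝ) by field_simp]
    rw [e_int, sub_self, zero_div]

lemma parseval (Mn : ℕ) (hMn : 0 < Mn) (B : ℤ) (h2B : 2 * B < (Mn:ℤ)) (s : ℤ)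
    (hs : s = 1 ∨ s = -1) (f : ℤ → ℂ) :
    ∑ k ∈ Finset.range Mn,
        ‖∑ m ∈ Finset.Icc (-B) B, f m * e ((k:ℝ) * ((s * m : ℤ):ℝ) / Mn)‖ ^ 2
      = Mn * ∑ m ∈ Finset.Icc (-B) B, ‖f m‖ ^ 2 := by
  set W := Finset.Icc (-B) B with hW
  set F : ℕ → ℂ := fun k => ∑ m ∈ W, f m * e ((k:ℝ) * ((s * m : ℤ):ℝ) / Mn) with hF
  have key : ∑ k ∈ Finset.range Mn, F k * (starRingEnd ℂ) (F k)
      = (Mn:ℂ) * ∑ m ∈ W, f m * (starRingEnd ℂ) (f m) := by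
    have expand : ∀ k ∈ Finset.range Mn, F k * (starRingEnd ℂ) (F k)
        = ∑ m ∈ W, ∑ m' ∈ W, f m * (starRingEnd ℂ) (f m')
            * e ((k:ℝ) * ((s * (m - m') : ℤ):ℝ) / Mn) := by
      intro k _
      rw [hF]
      rw [map_sum, Finset.sum_mul_sum]
      refine Finset.sum_congr rfl fun m _ => Finset.sum_congr rfl fun m' _ => ?_
      rw [map_mul, e_conj]
      have : e ((k:ℝ) * ((s * m : ℤ):ℝ) / Mn) * e (-((k:ℝ) * ((s * m' : ℤ):ℝ) / Mn))
          = e ((k:ℝ) * ((s * (m - m') : ℤ):ℝ) / Mn) := by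
        rw [← e_add]; congr 1; push_cast; ring
      rw [← this]; ring
    rw [Finset.sum_congr rfl expand, Finset.sum_comm]
    have inner : ∀ m ∈ W, ∑ k ∈ Finset.range Mn, ∑ m' ∈ W, f m * (starRingEnd ℂ) (f m')
            * e ((k:ℝ) * ((s * (m - m') : ℤ):ℝ) / Mn)
        = (Mn:ℂ) * (f m * (starRingEnd ℂ) (f m)) := by
      intro m hm
      rw [Finset.sum_comm]
      have collapse : ∀ m' ∈ W, ∑ k ∈ Finset.range Mn, f m * (starRingEnd ℂ) (f m')
              * e ((k:ℝ) * ((s * (m - m') : ℤ):ℝ) / Mn)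
          = if m' = m then (Mn:ℂ) * (f m * (starRingEnd ℂ) (f m)) else 0 := by
        intro m' hm'
        rw [← Finset.mul_sum, sum_e_delta Mn hMn]
        · rw [hW, Finset.mem_Icc] at hm hm'
          rcases eq_or_ne m' m with rfl|hne
          · rw [sub_self, mul_zero]
            simp [mul_comm]
          · rw [if_neg (by rcases hs with rfl|rfl <;> omega), if_neg hne, mul_zero]
        · rw [hW, Finset.mem_Icc] at hm hm'
          rcases hs with rfl|rfl <;> rw [abs_lt] <;> constructor <;> omega
      rw [Finset.sum_congr rfl collapse, Finset.sum_ite_eq' W m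
        (fun _ => (Mn:ℂ) * (f m * (starRingEnd ℂ) (f m))), if_pos hm]
    rw [Finset.sum_congr rfl inner, ← Finset.mul_sum]
  have key' : ∑ k ∈ Finset.range Mn, ((Complex.normSq (F k) : ℝ) : ℂ)
      = (Mn:ℂ) * ∑ m ∈ W, ((Complex.normSq (f m) : ℝ) : ℂ) := by
    simpa only [Complex.mul_conj] using key
  have keyR : ∑ k ∈ Finset.range Mn, Complex.normSq (F k)
      = Mn * ∑ m ∈ W, Complex.normSq (f m) := by exact_mod_cast key'
  simpa only [Complex.sq_norm] using keyR

/-- The two-term weighted generalised von Neumann theorem via the circle method. -/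
theorem circle_method_gvnt (d : ℕ) (C : ℝ) (hC : 1 ≤ C) (P : Polynomial ℤ)
    (hP : P.natDegree = d) :
    ∃ K : ℝ, 0 < K ∧ ∀ N : ℝ, 1 ≤ N → ∀ f₀ f₁ θ : ℤ → ℂ,
    (∀ m : ℤ, C * N ^ d < |(m : ℝ)| → f₀ m = 0) →
    (∀ m : ℤ, C * N ^ d < |(m : ℝ)| → f₁ m = 0) →
    (∀ m, ‖f₀ m‖ ≤ 1) → (∀ m, ‖f₁ m‖ ≤ 1) →
    ‖((N : ℂ) ^ (d + 1))⁻¹ *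
        ∑' m : ℤ, ∑ n ∈ Finset.Icc (1:ℤ) ⌊N⌋, θ n * f₀ m * f₁ (m + P.eval n)‖ ≤
      K * usNorm d θ N := by
  refine ⟨5 * C, by linarith, ?_⟩
  intro N hN f₀ f₁ θ hs₀ hs₁ hb₀ hb₁
  have hNpos : (0:ℝ) < N := lt_of_lt_of_le one_pos hN
  have hNd1 : (1:ℝ) ≤ N ^ d := one_le_pow₀ hN
  have hCN1 : (1:ℝ) ≤ C * N ^ d := by nlinarith
  have hL1 : (1:ℤ) ≤ ⌊N⌋ := Int.le_floor.mpr (by exact_mod_cast hN)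
  have hLN : ((⌊N⌋:ℤ):ℝ) ≤ N := Int.floor_le N
  have hLpos : (0:ℝ) < ((⌊N⌋:ℤ):ℝ) := by exact_mod_cast hL1
  set B : ℤ := ⌈C * N ^ d⌉ with hBdef
  have hBge : C * N ^ d ≤ (B:ℝ) := Int.le_ceil _
  have hBle : (B:ℝ) ≤ C * N ^ d + 1 := (Int.ceil_lt_add_one _).le
  have hB1 : 1 ≤ B := by
    have : (1:ℝ) ≤ (B:ℝ) := le_trans hCN1 hBge
    exact_mod_cast this
  set W : Finset ℤ := Finset.Icc (-B) B with hWdef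
  set I : Finset ℤ := Finset.Icc (1:ℤ) ⌊N⌋ with hIdef
  set A : ℤ := ∑ n ∈ I, |P.eval n| with hAdef
  have hA0 : 0 ≤ A := Finset.sum_nonneg fun _ _ => abs_nonneg _
  have hPA : ∀ n ∈ I, |P.eval n| ≤ A := fun n hn =>
    Finset.single_le_sum (f := fun n => |P.eval n|) (fun _ _ => abs_nonneg _) hn
  set Mn : ℕ := (2*B + 1 + A).toNat with hMndef
  have hMnZ : (Mn:ℤ) = 2*B + 1 + A := Int.toNat_of_nonneg (by omega)
  have hMn0 : 0 < Mn := by omega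
  have hMnC : ((Mn:ℕ):ℂ) ≠ 0 := Nat.cast_ne_zero.mpr hMn0.ne'
  have h2B : 2 * B < (Mn:ℤ) := by omega
  -- support
  have hout₀ : ∀ m : ℤ, m ∉ W → f₀ m = 0 := by
    intro m hm
    apply hs₀
    rw [hWdef, Finset.mem_Icc] at hm
    push_neg at hm
    have h1 : B + 1 ≤ |m| := by rcases abs_cases m with ⟨h, _⟩|⟨h, _⟩ <;> omega
    have h2 : ((B:ℝ)) + 1 ≤ |(m:ℝ)| := by
      rw [← Int.cast_abs]; exact_mod_cast (by exact_mod_cast h1 : ((B+1:ℤ):ℝ) ≤ ((|m|:ℤ):ℝ))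
    linarith
  have hout₁ : ∀ m : ℤ, m ∉ W → f₁ m = 0 := by
    intro m hm
    apply hs₁
    rw [hWdef, Finset.mem_Icc] at hm
    push_neg at hm
    have h1 : B + 1 ≤ |m| := by rcases abs_cases m with ⟨h, _⟩|⟨h, _⟩ <;> omega
    have h2 : ((B:ℝ)) + 1 ≤ |(m:ℝ)| := by
      rw [← Int.cast_abs]; exact_mod_cast (by exact_mod_cast h1 : ((B+1:ℤ):ℝ) ≤ ((|m|:ℤ):ℝ))
    linarith
  -- the three exponential sums
  set F₀ : ℕ → ℂ := fun k => ∑ m ∈ W, f₀ m * e ((k:ℝ) * (m:ℝ) / Mn) with hF₀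
  set F₁ : ℕ → ℂ := fun k => ∑ i ∈ W, f₁ i * e (-((k:ℝ) * (i:ℝ) / Mn)) with hF₁
  set T : ℕ → ℂ := fun k => ∑ n ∈ I, θ n * e ((k:ℝ) * ((P.eval n : ℤ):ℝ) / Mn) with hT
  -- Step A : the tsum is a finite sum
  have hsum : (∑' m : ℤ, ∑ n ∈ I, θ n * f₀ m * f₁ (m + P.eval n))
      = ∑ m ∈ W, ∑ n ∈ I, θ n * f₀ m * f₁ (m + P.eval n) := by
    apply tsum_eq_sum
    intro m hm
    simp [hout₀ m hm]
  -- Step B : circle-method identity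
  have claim1 : (∑ m ∈ W, ∑ n ∈ I, θ n * f₀ m * f₁ (m + P.eval n))
      = ((Mn:ℕ):ℂ)⁻¹ * ∑ m ∈ W, ∑ n ∈ I, ∑ i ∈ W, (θ n * f₀ m * f₁ i) *
          ∑ k ∈ Finset.range Mn, e ((k:ℝ) * ((m + P.eval n - i : ℤ):ℝ) / Mn) := by
    rw [Finset.mul_sum]
    refine Finset.sum_congr rfl fun m hm => ?_
    rw [Finset.mul_sum]
    refine Finset.sum_congr rfl fun n hn => ?_
    have hmW : -B ≤ m ∧ m ≤ B := by rwa [hWdef, Finset.mem_Icc] at hm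
    have hPn : |P.eval n| ≤ A := hPA n hn
    have delta : ∀ i ∈ W, (∑ k ∈ Finset.range Mn,
          e ((k:ℝ) * ((m + P.eval n - i : ℤ):ℝ) / Mn))
        = if m + P.eval n - i = 0 then ((Mn:ℕ):ℂ) else 0 := by
      intro i hi
      rw [Finset.mem_Icc] at hi
      apply sum_e_delta Mn hMn0
      rcases abs_cases (P.eval n) with ⟨h, _⟩|⟨h, _⟩ <;>
        rcases abs_cases (m + P.eval n - i) with ⟨h', _⟩|⟨h', _⟩ <;> omega
    have hcol : ∑ i ∈ W, (θ n * f₀ m * f₁ i) *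
          (if m + P.eval n - i = 0 then ((Mn:ℕ):ℂ) else 0)
        = ((Mn:ℕ):ℂ) * (θ n * f₀ m * f₁ (m + P.eval n)) := by
      have step : ∀ i ∈ W, (θ n * f₀ m * f₁ i) *
            (if m + P.eval n - i = 0 then ((Mn:ℕ):ℂ) else 0)
          = if i = m + P.eval n then (θ n * f₀ m * f₁ i) * ((Mn:ℕ):ℂ) else 0 := by
        intro i _
        by_cases h : i = m + P.eval n
        · rw [if_pos h, if_pos (by omega)]
        · rw [if_neg (by omega), if_neg h, mul_zero]
      rw [Finset.sum_congr rfl step, Finset.sum_ite_eq' W (m + P.eval n)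
        (fun i => (θ n * f₀ m * f₁ i) * ((Mn:ℕ):ℂ))]
      by_cases hmem : m + P.eval n ∈ W
      · rw [if_pos hmem]; ring
      · rw [if_neg hmem, hout₁ _ hmem]; ring
    calc θ n * f₀ m * f₁ (m + P.eval n)
        = ((Mn:ℕ):ℂ)⁻¹ * (((Mn:ℕ):ℂ) * (θ n * f₀ m * f₁ (m + P.eval n))) := by
          rw [inv_mul_cancel_left₀ hMnC]
      _ = ((Mn:ℕ):ℂ)⁻¹ * ∑ i ∈ W, (θ n * f₀ m * f₁ i) *
            ∑ k ∈ Finset.range Mn, e ((k:ℝ) * ((m + P.eval n - i : ℤ):ℝ) / Mn) := by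
          rw [Finset.sum_congr rfl fun i hi => by rw [delta i hi], hcol]
  have claim2 : (∑ k ∈ Finset.range Mn, F₀ k * F₁ k * T k)
      = ∑ m ∈ W, ∑ n ∈ I, ∑ i ∈ W, (θ n * f₀ m * f₁ i) *
          ∑ k ∈ Finset.range Mn, e ((k:ℝ) * ((m + P.eval n - i : ℤ):ℝ) / Mn) := by
    have hk : ∀ k ∈ Finset.range Mn, F₀ k * F₁ k * T k
        = ∑ m ∈ W, ∑ i ∈ W, ∑ n ∈ I,
            (θ n * f₀ m * f₁ i) * e ((k:ℝ) * ((m + P.eval n - i : ℤ):ℝ) / Mn) := by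
      intro k _
      show (∑ m ∈ W, f₀ m * e ((k:ℝ) * (m:ℝ) / Mn)) *
            (∑ i ∈ W, f₁ i * e (-((k:ℝ) * (i:ℝ) / Mn))) *
            (∑ n ∈ I, θ n * e ((k:ℝ) * ((P.eval n : ℤ):ℝ) / Mn)) = _
      rw [Finset.sum_mul_sum, Finset.sum_mul]
      refine Finset.sum_congr rfl fun m _ => ?_
      rw [Finset.sum_mul]
      refine Finset.sum_congr rfl fun i _ => ?_
      rw [Finset.mul_sum]
      refine Finset.sum_congr rfl fun n _ => ?_
      have hsplit : e ((k:ℝ) * ((m + P.eval n - i : ℤ):ℝ) / Mn)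
          = e ((k:ℝ) * (m:ℝ) / Mn) * e (-((k:ℝ) * (i:ℝ) / Mn))
            * e ((k:ℝ) * ((P.eval n : ℤ):ℝ) / Mn) := by
        rw [← e_add, ← e_add]; congr 1; push_cast; ring
      rw [hsplit]; ring
    rw [Finset.sum_congr rfl hk, Finset.sum_comm]
    refine Finset.sum_congr rfl fun m _ => ?_
    rw [Finset.sum_comm]
    rw [Finset.sum_congr rfl fun i (_ : i ∈ W) => Finset.sum_comm]
    rw [Finset.sum_comm]
    refine Finset.sum_congr rfl fun n _ => Finset.sum_congr rfl fun i _ => ?_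
    rw [Finset.mul_sum]
  -- bounding the polynomial-phase sum by the u^s norm
  have hbdd : BddAbove (Set.range fun Q : {Q : Polynomial ℝ // Q.natDegree ≤ d} =>
      ‖(⌊N⌋ : ℂ)⁻¹ *
        ∑ n ∈ Finset.Icc (1:ℤ) ⌊N⌋, θ n * e (-(Q.1.eval (n : ℝ)))‖) := by
    refine ⟨∑ n ∈ Finset.Icc (1:ℤ) ⌊N⌋, ‖θ n‖, ?_⟩
    rintro x ⟨Q, rfl⟩
    dsimp only
    rw [norm_mul]
    calc ‖(⌊N⌋:ℂ)⁻¹‖ * ‖∑ n ∈ Finset.Icc (1:ℤ) ⌊N⌋,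
          θ n * e (-(Q.1.eval (n:ℝ)))‖
        ≤ 1 * ∑ n ∈ Finset.Icc (1:ℤ) ⌊N⌋, ‖θ n‖ := by
          apply mul_le_mul
          · rw [norm_inv, Complex.norm_intCast]
            rw [abs_of_pos hLpos]
            rw [inv_le_one_iff₀]
            right; exact_mod_cast hL1
          · refine le_trans (norm_sum_le _ _) ?_
            refine Finset.sum_le_sum fun n _ => ?_
            rw [norm_mul, abs_e, mul_one]
          · exact norm_nonneg _
          · norm_num
      _ = ∑ n ∈ Finset.Icc (1:ℤ) ⌊N⌋, ‖θ n‖ := one_mul _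
  have hu0 : 0 ≤ usNorm d θ N :=
    le_trans (norm_nonneg _) (le_ciSup hbdd ⟨0, by simp⟩)
  have hTb : ∀ k : ℕ, ‖T k‖ ≤ ((⌊N⌋:ℤ):ℝ) * usNorm d θ N := by
    intro k
    set Q : Polynomial ℝ := Polynomial.C (-(k:ℝ)/Mn) * P.map (Int.castRingHom ℝ) with hQ
    have hQd : Q.natDegree ≤ d :=
      le_trans (Polynomial.natDegree_C_mul_le _ _)
        (le_trans Polynomial.natDegree_map_le (le_of_eq hP))
    have hval : (∑ n ∈ Finset.Icc (1:ℤ) ⌊N⌋, θ n * e (-(Q.eval (n:ℝ)))) = T k := by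
      rw [hT, ← hIdef]
      refine Finset.sum_congr rfl fun n _ => ?_
      have heval : Q.eval (n:ℝ) = (-(k:ℝ)/Mn) * ((P.eval n : ℤ):ℝ) := by
        rw [hQ, Polynomial.eval_mul, Polynomial.eval_C, Polynomial.eval_intCast_map,
          Int.coe_castRingHom]
        norm_num
      congr 1
      rw [heval]
      push_cast
      ring
    have hle : ‖(⌊N⌋:ℂ)⁻¹ * T k‖ ≤ usNorm d θ N := by
      rw [← hval]
      exact le_ciSup hbdd (⟨Q, hQd⟩ : {Q : Polynomial ℝ // Q.natDegree ≤ d})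
    have habs : ‖(⌊N⌋:ℂ)⁻¹ * T k‖ = (((⌊N⌋:ℤ):ℝ))⁻¹ * ‖T k‖ := by
      rw [norm_mul, norm_inv, Complex.norm_intCast, abs_of_pos hLpos]
    rw [habs] at hle
    calc ‖T k‖ = ((⌊N⌋:ℤ):ℝ) * ((((⌊N⌋:ℤ):ℝ))⁻¹ * ‖T k‖) := by
          field_simp
      _ ≤ ((⌊N⌋:ℤ):ℝ) * usNorm d θ N := by
          apply mul_le_mul_of_nonneg_left hle (le_of_lt hLpos)
  -- Parseval bounds
  have hcard : ((W.card : ℕ):ℝ) = ((2*B+1 : ℤ):ℝ) := by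
    have h1 : W.card = (2*B+1).toNat := by
      rw [hWdef, Int.card_Icc]; congr 1; ring
    have h2 : (((2*B+1).toNat : ℕ) : ℤ) = 2*B+1 := Int.toNat_of_nonneg (by omega)
    rw [h1]; exact_mod_cast h2
  have hPar₀ : ∑ k ∈ Finset.range Mn, ‖F₀ k‖ ^ 2
      ≤ (Mn:ℝ) * ((2*B+1 : ℤ):ℝ) := by
    have hp := parseval Mn hMn0 B h2B 1 (Or.inl rfl) f₀
    simp only [one_mul] at hp
    rw [hF₀]
    rw [show (∑ k ∈ Finset.range Mn, ‖(fun k => ∑ m ∈ W, f₀ m * e ((k:ℝ) * (m:ℝ) / Mn)) k‖ ^ 2)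
      = ∑ k ∈ Finset.range Mn, ‖∑ m ∈ Finset.Icc (-B) B, f₀ m * e ((k:ℝ) * (m:ℝ) / Mn)‖ ^ 2 from rfl]
    rw [hp]
    apply mul_le_mul_of_nonneg_left _ (by positivity)
    calc ∑ m ∈ Finset.Icc (-B) B, ‖f₀ m‖ ^ 2
        ≤ ∑ m ∈ Finset.Icc (-B) B, 1 := by
          refine Finset.sum_le_sum fun m _ => ?_
          have := hb₀ m
          nlinarith [norm_nonneg (f₀ m)]
      _ = ((W.card : ℕ):ℝ) := by rw [hWdef]; simp
      _ = ((2*B+1 : ℤ):ℝ) := hcard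
  have hPar₁ : ∑ k ∈ Finset.range Mn, ‖F₁ k‖ ^ 2
      ≤ (Mn:ℝ) * ((2*B+1 : ℤ):ℝ) := by
    have hp := parseval Mn hMn0 B h2B (-1) (Or.inr rfl) f₁
    have heq : ∀ k ∈ Finset.range Mn, ‖F₁ k‖ ^ 2
        = ‖∑ m ∈ Finset.Icc (-B) B,
            f₁ m * e ((k:ℝ) * (((-1) * m : ℤ):ℝ) / Mn)‖ ^ 2 := by
      intro k _
      rw [hF₁]
      congr 2
      refine Finset.sum_congr rfl fun i _ => ?_
      congr 1
      push_cast
      ring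
    rw [Finset.sum_congr rfl heq, hp]
    apply mul_le_mul_of_nonneg_left _ (by positivity)
    calc ∑ m ∈ Finset.Icc (-B) B, ‖f₁ m‖ ^ 2
        ≤ ∑ m ∈ Finset.Icc (-B) B, 1 := by
          refine Finset.sum_le_sum fun m _ => ?_
          have := hb₁ m
          nlinarith [norm_nonneg (f₁ m)]
      _ = ((W.card : ℕ):ℝ) := by rw [hWdef]; simp
      _ = ((2*B+1 : ℤ):ℝ) := hcard
  -- Cauchy-Schwarz
  have hCS : ∑ k ∈ Finset.range Mn, ‖F₀ k‖ * ‖F₁ k‖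
      ≤ (Mn:ℝ) * ((2*B+1 : ℤ):ℝ) := by
    have h1 := Finset.sum_mul_sq_le_sq_mul_sq (Finset.range Mn)
      (fun k => ‖F₀ k‖) (fun k => ‖F₁ k‖)
    have h2 : (∑ k ∈ Finset.range Mn, ‖F₀ k‖ * ‖F₁ k‖) ^ 2
        ≤ ((Mn:ℝ) * ((2*B+1 : ℤ):ℝ)) ^ 2 := by
      calc (∑ k ∈ Finset.range Mn, ‖F₀ k‖ * ‖F₁ k‖) ^ 2
          ≤ (∑ k ∈ Finset.range Mn, ‖F₀ k‖ ^ 2) *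
            (∑ k ∈ Finset.range Mn, ‖F₁ k‖ ^ 2) := h1
        _ ≤ ((Mn:ℝ) * ((2*B+1 : ℤ):ℝ)) ^ 2 := by
            rw [sq]
            apply mul_le_mul hPar₀ hPar₁ (Finset.sum_nonneg fun k _ => by positivity)
              (by positivity)
    have hnn : 0 ≤ ∑ k ∈ Finset.range Mn, ‖F₀ k‖ * ‖F₁ k‖ :=
      Finset.sum_nonneg fun k _ => mul_nonneg (norm_nonneg _) (norm_nonneg _)
    exact (pow_le_pow_iff_left₀ hnn (by positivity) two_ne_zero).mp h2
  -- final assembly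
  have hmain : ‖∑ k ∈ Finset.range Mn, F₀ k * F₁ k * T k‖
      ≤ (Mn:ℝ) * ((2*B+1 : ℤ):ℝ) * (((⌊N⌋:ℤ):ℝ) * usNorm d θ N) := by
    calc ‖∑ k ∈ Finset.range Mn, F₀ k * F₁ k * T k‖
        ≤ ∑ k ∈ Finset.range Mn, ‖F₀ k * F₁ k * T k‖ :=
          norm_sum_le _ _
      _ ≤ ∑ k ∈ Finset.range Mn, ‖F₀ k‖ * ‖F₁ k‖ *
            (((⌊N⌋:ℤ):ℝ) * usNorm d θ N) := by
          refine Finset.sum_le_sum fun k _ => ?_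
          rw [norm_mul, norm_mul]
          apply mul_le_mul_of_nonneg_left (hTb k)
            (mul_nonneg (norm_nonneg _) (norm_nonneg _))
      _ = (∑ k ∈ Finset.range Mn, ‖F₀ k‖ * ‖F₁ k‖) *
            (((⌊N⌋:ℤ):ℝ) * usNorm d θ N) := by rw [← Finset.sum_mul]
      _ ≤ (Mn:ℝ) * ((2*B+1 : ℤ):ℝ) * (((⌊N⌋:ℤ):ℝ) * usNorm d θ N) := by
          apply mul_le_mul_of_nonneg_right hCS
            (mul_nonneg (le_of_lt hLpos) hu0)
  -- rewrite goal
  rw [hsum, claim1, ← claim2]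
  rw [norm_mul, norm_mul, norm_inv, norm_inv, norm_pow, Complex.norm_real, Real.norm_eq_abs,
    Complex.norm_natCast, abs_of_pos hNpos]
  have hMnR : (0:ℝ) < (Mn:ℝ) := by exact_mod_cast hMn0
  calc (N ^ (d+1))⁻¹ * (((Mn:ℕ):ℝ)⁻¹ *
        ‖∑ k ∈ Finset.range Mn, F₀ k * F₁ k * T k‖)
      ≤ (N ^ (d+1))⁻¹ * (((Mn:ℕ):ℝ)⁻¹ *
        ((Mn:ℝ) * ((2*B+1 : ℤ):ℝ) * (((⌊N⌋:ℤ):ℝ) * usNorm d θ N))) := by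
        apply mul_le_mul_of_nonneg_left _ (by positivity)
        apply mul_le_mul_of_nonneg_left hmain (by positivity)
    _ = (N ^ (d+1))⁻¹ * (((2*B+1 : ℤ):ℝ) * (((⌊N⌋:ℤ):ℝ) * usNorm d θ N)) := by
        field_simp
    _ ≤ 5 * C * usNorm d θ N := by
        have h2B5 : ((2*B+1 : ℤ):ℝ) ≤ 5 * C * N ^ d := by push_cast; nlinarith
        have hstep : ((2*B+1 : ℤ):ℝ) * (((⌊N⌋:ℤ):ℝ) * usNorm d θ N)
            ≤ (5 * C * N ^ d) * (N * usNorm d θ N) := by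
          apply mul_le_mul h2B5 _ (mul_nonneg (le_of_lt hLpos) hu0) (by positivity)
          exact mul_le_mul_of_nonneg_right hLN hu0
        calc (N ^ (d+1))⁻¹ * (((2*B+1 : ℤ):ℝ) * (((⌊N⌋:ℤ):ℝ) * usNorm d θ N))
            ≤ (N ^ (d+1))⁻¹ * ((5 * C * N ^ d) * (N * usNorm d θ N)) := by
              apply mul_le_mul_of_nonneg_left hstep (by positivity)
          _ = 5 * C * usNorm d θ N := by
              have : N ^ (d+1) = N ^ d * N := pow_succ N d
              field_simp
              ring
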